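/- Let H be a connected r-uniform hypergraph (r ≥ 2) on n vertices with diameter D, and let H' = H − e be a connected sub-hypergraph obtained by deleting one edge e. Then for every vertex w of H, the sum of the H'-distances from w to the r vertices of e satisfies ∑_{v ∈ e} d_{H'}(w,v) ≤ r(r−1)(D+1). -/
import Mathlib

/-- `hconn E k u v` : there is a walk of length `k` from `u` to `v` in the hypergraph
with edge set `E`, i.e. an alternating sequence of vertices and edges where consecutive
vertices both lie in the connecting edge. -/
def hconn {n : ℕ} (E : Finset (Finset (Fin n))) : ℕ → Fin n → Fin n → Prop
  | 0, u, v => u = v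
  | k + 1, u, v => ∃ e ∈ E, ∃ w ∈ e, u ∈ e ∧ hconn E k w v

/-- Distance between two vertices of a hypergraph: minimum length of a connecting walk. -/
noncomputable def hdist {n : ℕ} (E : Finset (Finset (Fin n))) (u v : Fin n) : ℕ :=
  sInf {k | hconn E k u v}

/-- Diameter of a hypergraph: maximum distance between two vertices. -/
noncomputable def hdiam {n : ℕ} (E : Finset (Finset (Fin n))) : ℕ :=
  sSup {d | ∃ u v : Fin n, hdist E u v = d}

/-- A hypergraph is connected if any two vertices are joined by a walk. -/
def HConnected {n : ℕ} (E : Finset (Finset (Fin n))) : Prop :=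
  ∀ u v : Fin n, ∃ k, hconn E k u v

/-- Degree of a vertex: the number of edges containing it. -/
def hdeg {n : ℕ} (E : Finset (Finset (Fin n))) (v : Fin n) : ℕ :=
  (E.filter (fun e => v ∈ e)).card

section Aux

variable {n : ℕ} {E : Finset (Finset (Fin n))}

theorem hconn_trans {k l : ℕ} {u v x : Fin n}
    (h1 : hconn E k u v) (h2 : hconn E l v x) : hconn E (k + l) u x := by
  induction k generalizing u with
  | zero =>
      have h : u = v := h1
      rw [Nat.zero_add, h]; exact h2
  | succ k ih =>
      obtain ⟨ed, hed, z, hz, hu, ht⟩ := h1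
      have hkl : k + 1 + l = (k + l) + 1 := by omega
      rw [hkl]
      exact ⟨ed, hed, z, hz, hu, ih ht⟩

theorem hconn_single {ed : Finset (Fin n)} (hed : ed ∈ E) {u v : Fin n}
    (hu : u ∈ ed) (hv : v ∈ ed) : hconn E 1 u v :=
  ⟨ed, hed, v, hv, hu, rfl⟩

theorem hconn_symm {k : ℕ} {u v : Fin n} (h : hconn E k u v) : hconn E k v u := by
  induction k generalizing u v with
  | zero => exact (h : u = v).symm
  | succ k ih =>
      obtain ⟨ed, hed, z, hz, hu, ht⟩ := h
      exact hconn_trans (ih ht) (hconn_single hed hz hu)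

theorem hdist_le {k : ℕ} {u v : Fin n} (h : hconn E k u v) : hdist E u v ≤ k :=
  Nat.sInf_le h

theorem hconn_hdist {u v : Fin n} (h : ∃ k, hconn E k u v) :
    hconn E (hdist E u v) u v :=
  Nat.sInf_mem h

theorem hdist_symm (u v : Fin n) : hdist E u v = hdist E v u := by
  unfold hdist
  congr 1
  ext k
  exact ⟨fun h => hconn_symm h, fun h => hconn_symm h⟩

theorem hdist_triangle {u v x : Fin n} (h1 : ∃ k, hconn E k u v) (h2 : ∃ k, hconn E k v x) :
    hdist E u x ≤ hdist E u v + hdist E v x :=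
  hdist_le (hconn_trans (hconn_hdist h1) (hconn_hdist h2))

theorem hconn_take {i k : ℕ} (hik : i ≤ k) {u v : Fin n} (h : hconn E k u v) :
    ∃ z, hconn E i u z ∧ hconn E (k - i) z v := by
  induction i generalizing k u with
  | zero => exact ⟨u, rfl, by simpa using h⟩
  | succ i ih =>
      cases k with
      | zero => omega
      | succ k =>
          obtain ⟨ed, hed, z, hz, hu, ht⟩ := h
          obtain ⟨z', h1, h2⟩ := ih (by omega) ht
          refine ⟨z', ⟨ed, hed, z, hz, hu, h1⟩, ?_⟩
          simpa [Nat.succ_sub_succ] using h2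

theorem hconn_split (e : Finset (Fin n)) {k : ℕ} {u v : Fin n} (h : hconn E k u v) :
    hconn (E.erase e) k u v ∨
      ∃ c1 ∈ e, ∃ c2 ∈ e, ∃ p s, hconn (E.erase e) p u c1 ∧ hconn (E.erase e) s c2 v ∧
        p + 1 + s ≤ k := by
  induction k generalizing u with
  | zero => exact Or.inl h
  | succ k ih =>
      obtain ⟨ed, hed, z, hz, hu2, ht⟩ := h
      by_cases hede : ed = e
      · subst hede
        rcases ih ht with ht' | ⟨c1, hc1, c2, hc2, p, s, h1, h2, hps⟩
        · exact Or.inr ⟨u, hu2, z, hz, 0, k, rfl, ht', by omega⟩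
        · exact Or.inr ⟨u, hu2, c2, hc2, 0, s, rfl, h2, by omega⟩
      · have hed' : ed ∈ E.erase e := Finset.mem_erase.mpr ⟨hede, hed⟩
        rcases ih ht with ht' | ⟨c1, hc1, c2, hc2, p, s, h1, h2, hps⟩
        · exact Or.inl ⟨ed, hed', z, hz, hu2, ht'⟩
        · exact Or.inr ⟨c1, hc1, c2, hc2, p + 1, s, ⟨ed, hed', z, hz, hu2, h1⟩, h2, by omega⟩

end Aux

theorem stmt_13 (n r : ℕ) (hr : 2 ≤ r) (E : Finset (Finset (Fin n)))
    (hu : ∀ e ∈ E, e.card = r) (hc : HConnected E) (D : ℕ) (hD : hdiam E = D)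
    (e : Finset (Fin n)) (he : e ∈ E) (hc' : HConnected (E.erase e))
    (w : Fin n) :
    ∑ v ∈ e, hdist (E.erase e) w v ≤ r * (r - 1) * (D + 1) := by
  classical
  set E' := E.erase e with hE'
  have hce : e.card = r := hu e he
  have hene : e.Nonempty := Finset.card_pos.mp (by rw [hce]; omega)
  obtain ⟨u0, hu0e, hu0min'⟩ := Finset.exists_min_image e (fun v => hdist E' w v) hene
  have hu0min : ∀ b ∈ e, hdist E' w u0 ≤ hdist E' w b := hu0min'
  -- diameter bound
  have hbdd : BddAbove {d | ∃ u v : Fin n, hdist E u v = d} := by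
    have hsub : {d | ∃ u v : Fin n, hdist E u v = d} ⊆
        Set.range (fun p : Fin n × Fin n => hdist E p.1 p.2) := by
      rintro d ⟨x, y, rfl⟩; exact ⟨(x, y), rfl⟩
    exact ((Set.finite_range _).subset hsub).bddAbove
  have hdE : ∀ x y : Fin n, hdist E x y ≤ D := by
    intro x y
    have h1 : hdist E x y ≤ hdiam E := le_csSup hbdd ⟨x, y, rfl⟩
    omega
  -- the key splitting fact
  have star : ∀ x : Fin n, hdist E' w x ≤ D ∨
      ∃ c1 ∈ e, ∃ c2 ∈ e, hdist E' w c1 + 1 + hdist E' c2 x ≤ D := by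
    intro x
    have hw : hconn E (hdist E w x) w x := hconn_hdist (hc w x)
    rcases hconn_split e hw with h | ⟨c1, hc1, c2, hc2, p, s, h1, h2, hps⟩
    · left; exact le_trans (hdist_le h) (hdE w x)
    · right
      refine ⟨c1, hc1, c2, hc2, ?_⟩
      have e1 : hdist E' w c1 ≤ p := hdist_le h1
      have e2 : hdist E' c2 x ≤ s := hdist_le h2
      have e3 := hdE w x
      omega
  have hαD : hdist E' w u0 ≤ D := by
    rcases star u0 with h | ⟨c1, hc1, c2, hc2, hs⟩
    · exact h
    · have := hu0min c1 hc1; omega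
  obtain ⟨γ, hγ⟩ : ∃ γ, hdist E' w u0 + γ = D := ⟨D - hdist E' w u0, by omega⟩
  -- single extension step
  have hstep : ∀ (S : Finset (Fin n)) (A : ℕ), S ⊆ e → S ≠ e → hdist E' w u0 ≤ A →
      (∀ x ∈ S, hdist E' w x ≤ A) →
      ∃ v, v ∈ e ∧ v ∉ S ∧ hdist E' w v ≤ A + 2 * γ := by
    intro S A hSe hSne hαA hA
    have hne : (e \ S).Nonempty := by
      rw [Finset.sdiff_nonempty]
      intro hsub
      exact hSne (Finset.Subset.antisymm hSe hsub)
    obtain ⟨v, hv, hvmin'⟩ := Finset.exists_min_image (e \ S) (fun v => hdist E' w v) hne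
    have hvmin : ∀ b ∈ e \ S, hdist E' w v ≤ hdist E' w b := hvmin'
    have hve : v ∈ e := (Finset.mem_sdiff.mp hv).1
    have hvS : v ∉ S := (Finset.mem_sdiff.mp hv).2
    refine ⟨v, hve, hvS, ?_⟩
    set i : ℕ := max (D + 1) (A + γ) with hi
    by_cases hcase : hdist E' w v < i
    · rcases max_choice (D + 1) (A + γ) with h | h <;> omega
    · push_neg at hcase
      have hwv : hconn E' (hdist E' w v) w v := hconn_hdist (hc' w v)
      obtain ⟨z, hz1, hz2⟩ := hconn_take hcase hwv
      have hwz_le : hdist E' w z ≤ i := hdist_le hz1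
      have hzv : hdist E' z v ≤ hdist E' w v - i := hdist_le hz2
      have htri : hdist E' w v ≤ hdist E' w z + hdist E' z v :=
        hdist_triangle ⟨_, hz1⟩ ⟨_, hz2⟩
      have hwz_ge : i ≤ hdist E' w z := by omega
      rcases star z with h | ⟨c1, hc1, c2, hc2, hs⟩
      · have h1 : D + 1 ≤ i := le_max_left _ _
        omega
      · have hc1min : hdist E' w u0 ≤ hdist E' w c1 := hu0min c1 hc1
        have htzc2 : hdist E' z c2 = hdist E' c2 z := hdist_symm z c2
        have hup : hdist E' w c2 ≤ hdist E' w z + hdist E' z c2 :=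
          hdist_triangle ⟨_, hz1⟩ (hc' z c2)
        have hlow : hdist E' w z ≤ hdist E' w c2 + hdist E' c2 z :=
          hdist_triangle (hc' w c2) (hc' c2 z)
        have h1 : D + 1 ≤ i := le_max_left _ _
        have h2 : A + γ ≤ i := le_max_right _ _
        have hc2A : A < hdist E' w c2 := by omega
        have hc2S : c2 ∉ S := fun hmem => absurd (hA c2 hmem) (by omega)
        have hvc2 : hdist E' w v ≤ hdist E' w c2 :=
          hvmin c2 (Finset.mem_sdiff.mpr ⟨hc2, hc2S⟩)
        rcases max_choice (D + 1) (A + γ) with h | h <;> omega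
  -- main induction building up the k closest vertices of e
  have main : ∀ k, 1 ≤ k → k ≤ r → ∃ S : Finset (Fin n), S ⊆ e ∧ S.card = k ∧
      (∀ x ∈ S, hdist E' w x ≤ hdist E' w u0 + (k - 1) * (2 * γ)) ∧
      2 * ∑ x ∈ S, hdist E' w x ≤
        k * (2 * hdist E' w u0) + (2 * γ) * (k * (k - 1)) := by
    intro k
    induction k with
    | zero => omega
    | succ k ih =>
        intro _ hkr
        by_cases hk0 : k = 0
        · subst hk0
          refine ⟨{u0}, Finset.singleton_subset_iff.mpr hu0e, rfl, ?_, ?_⟩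
          · intro x hx
            rw [Finset.mem_singleton] at hx
            subst hx
            simp
          · simp
        · obtain ⟨j, rfl⟩ := Nat.exists_eq_succ_of_ne_zero hk0
          obtain ⟨S, hSe, hScard, hSbound, hSsum⟩ := ih (by omega) (by omega)
          have hSne : S ≠ e := by
            intro hEq
            rw [hEq, hce] at hScard
            omega
          have hSbound' : ∀ x ∈ S, hdist E' w x ≤ hdist E' w u0 + j * (2 * γ) := by
            intro x hx
            exact hSbound x hx
          obtain ⟨v, hve, hvS, hvbound⟩ := hstep S (hdist E' w u0 + j * (2 * γ)) hSe hSne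
            (Nat.le_add_right _ _) hSbound'
          refine ⟨insert v S, Finset.insert_subset hve hSe, ?_, ?_, ?_⟩
          · rw [Finset.card_insert_of_notMem hvS, hScard]
          · intro x hx
            have hgoal : hdist E' w u0 + (j + 1 + 1 - 1) * (2 * γ) =
                hdist E' w u0 + j * (2 * γ) + 2 * γ := by
              simp only [Nat.add_sub_cancel]
              ring
            rw [hgoal]
            rcases Finset.mem_insert.mp hx with rfl | hx
            · exact hvbound
            · exact le_trans (hSbound' x hx) (by omega)
          · rw [Finset.sum_insert hvS]
            have hnew : 2 * hdist E' w v ≤ 2 * (hdist E' w u0 + j * (2 * γ) + 2 * γ) :=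
              Nat.mul_le_mul_left 2 (by omega)
            have hold : 2 * ∑ x ∈ S, hdist E' w x ≤
                (j + 1) * (2 * hdist E' w u0) + (2 * γ) * ((j + 1) * j) := hSsum
            have hiden : (j + 1 + 1) * (2 * hdist E' w u0) +
                (2 * γ) * ((j + 1 + 1) * (j + 1 + 1 - 1)) =
                2 * (hdist E' w u0 + j * (2 * γ) + 2 * γ) +
                ((j + 1) * (2 * hdist E' w u0) + (2 * γ) * ((j + 1) * j)) := by
              simp only [Nat.add_sub_cancel]
              ring
            calc 2 * (hdist E' w v + ∑ x ∈ S, hdist E' w x)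
                = 2 * hdist E' w v + 2 * ∑ x ∈ S, hdist E' w x := by ring
              _ ≤ 2 * (hdist E' w u0 + j * (2 * γ) + 2 * γ) +
                  ((j + 1) * (2 * hdist E' w u0) + (2 * γ) * ((j + 1) * j)) :=
                  Nat.add_le_add hnew hold
              _ = (j + 1 + 1) * (2 * hdist E' w u0) +
                  (2 * γ) * ((j + 1 + 1) * (j + 1 + 1 - 1)) := hiden.symm
  -- finish
  obtain ⟨S, hSe, hScard, _, hSsum⟩ := main r (by omega) le_rfl
  have hSeq : S = e := Finset.eq_of_subset_of_card_le hSe (by rw [hScard, hce])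
  rw [hSeq] at hSsum
  obtain ⟨q, rfl⟩ : ∃ q, r = q + 2 := ⟨r - 2, by omega⟩
  have hkey : (q + 2) * (2 * hdist E' w u0) + (2 * γ) * ((q + 2) * (q + 2 - 1)) ≤
      2 * ((q + 2) * (q + 2 - 1) * (D + 1)) := by
    have h21 : q + 2 - 1 = q + 1 := rfl
    rw [h21]
    have hD' : D = hdist E' w u0 + γ := hγ.symm
    rw [hD']
    calc (q + 2) * (2 * hdist E' w u0) + (2 * γ) * ((q + 2) * (q + 1))
        ≤ (q + 2) * (2 * hdist E' w u0) + (2 * γ) * ((q + 2) * (q + 1)) +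
          2 * (q + 2) * (q * hdist E' w u0 + q + 1) := Nat.le_add_right _ _
      _ = 2 * ((q + 2) * (q + 1) * (hdist E' w u0 + γ + 1)) := by ring
  have hfin : 2 * ∑ x ∈ e, hdist E' w x ≤ 2 * ((q + 2) * (q + 2 - 1) * (D + 1)) :=
    le_trans hSsum hkey
  omega
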